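/- Let K ≥ 1 and I ≥ 2K. The number of orbits of pairs of count vectors of size K on Fin I under the action of S₂ × S_I (where the nontrivial element of S₂ swaps the two count vectors of the pair and σ ∈ S_I, the permutation group of Fin I, relabels the index set of both count vectors simultaneously by precomposition with σ⁻¹) is equal to the number of orbits of pairs of count vectors of size K on Fin (2K) under the corresponding S₂ × S_{2K} action. In other words, |C^K_I| = |C^K_{2K}| whenever I ≥ 2K. -/

import Mathlib

open Finset

/-- The orbit of an ordered pair of count vectors `(g₁, g₂)` under the action of
`S₂ × S_I`: the `S₂` factor swaps the two count vectors, and a permutation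
`σ ∈ S_I` relabels the index set of both count vectors by precomposition
with `σ⁻¹`. -/
def pairOrbit (I : ℕ) (x : (Fin I → ℕ) × (Fin I → ℕ)) :
    Set ((Fin I → ℕ) × (Fin I → ℕ)) :=
  {y | ∃ σ : Equiv.Perm (Fin I),
    y = (x.1 ∘ ⇑σ.symm, x.2 ∘ ⇑σ.symm) ∨ y = (x.2 ∘ ⇑σ.symm, x.1 ∘ ⇑σ.symm)}

/-- The set of identity states `C^K_I`: the orbits of pairs of count vectors of
size `K` on `Fin I` under the `S₂ × S_I` action. -/
def IdentityStates (K I : ℕ) :=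
  {S : Set ((Fin I → ℕ) × (Fin I → ℕ)) //
    ∃ x : (Fin I → ℕ) × (Fin I → ℕ),
      (∑ i, x.1 i = K) ∧ (∑ i, x.2 i = K) ∧ S = pairOrbit I x}


-- extension lemma: an injection from s onto t extends to a permutation
lemma ext_perm {α : Type*} [Fintype α] [DecidableEq α] (s t : Finset α) (f : α → α)
    (hmap : ∀ a ∈ s, f a ∈ t)
    (hinj : ∀ a ∈ s, ∀ b ∈ s, f a = f b → a = b)
    (hsurj : ∀ b ∈ t, ∃ a ∈ s, f a = b) :
    ∃ σ : Equiv.Perm α, (∀ a ∈ s, σ a = f a) ∧ (∀ a, a ∉ s → σ a ∉ t) := by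
  classical
  let e : {x // x ∈ s} ≃ {x // x ∈ t} :=
    { toFun := fun a => ⟨f a, hmap a a.2⟩
      invFun := fun b => ⟨(hsurj b b.2).choose, (hsurj b b.2).choose_spec.1⟩
      left_inv := by
        intro a
        have h := (hsurj (f a) (hmap a a.2)).choose_spec
        exact Subtype.ext (hinj _ h.1 _ a.2 h.2)
      right_inv := by
        intro b
        exact Subtype.ext (hsurj b b.2).choose_spec.2 }
  have hcard : Fintype.card {x // ¬ x ∈ s} = Fintype.card {x // ¬ x ∈ t} := by
    have h1 : Fintype.card {x // x ∈ s} = Fintype.card {x // x ∈ t} := Fintype.card_congr e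
    have h2 := Fintype.card_subtype_compl (fun x => x ∈ s)
    have h3 := Fintype.card_subtype_compl (fun x => x ∈ t)
    omega
  have e' : {x // ¬ x ∈ s} ≃ {x // ¬ x ∈ t} := Fintype.equivOfCardEq hcard
  refine ⟨Equiv.subtypeCongr e e', ?_, ?_⟩
  · intro a ha
    show (Equiv.sumCompl _) (Sum.map (⇑e) (⇑e') ((Equiv.sumCompl _).symm a)) = f a
    rw [Equiv.sumCompl_symm_apply_of_pos ha]
    rfl
  · intro a ha
    have : (Equiv.subtypeCongr e e') a = (e' ⟨a, ha⟩ : α) := by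
      show (Equiv.sumCompl _) (Sum.map (⇑e) (⇑e') ((Equiv.sumCompl _).symm a)) = _
      rw [Equiv.sumCompl_symm_apply_of_neg ha]
      rfl
    rw [this]
    exact (e' ⟨a, ha⟩).2

def padf {K I : ℕ} (hI : 2 * K ≤ I) (g : Fin (2 * K) → ℕ) : Fin I → ℕ :=
  fun i => if h' : i.1 < 2 * K then g ⟨i.1, h'⟩ else 0

lemma padf_castLE {K I : ℕ} (hI : 2 * K ≤ I) (g : Fin (2 * K) → ℕ) (j : Fin (2 * K)) :
    padf hI g (Fin.castLE hI j) = g j := dif_pos j.2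

lemma padf_of_not_lt {K I : ℕ} (hI : 2 * K ≤ I) (g : Fin (2 * K) → ℕ) {i : Fin I}
    (h : ¬ i.1 < 2 * K) : padf hI g i = 0 := dif_neg h

lemma sum_padf {K I : ℕ} (hI : 2 * K ≤ I) (g : Fin (2 * K) → ℕ) :
    ∑ i, padf hI g i = ∑ j, g j := by
  classical
  have hsub : (univ : Finset (Fin (2 * K))).map (Fin.castLEEmb hI) ⊆ univ :=
    subset_univ _
  rw [← Finset.sum_subset hsub]
  · rw [Finset.sum_map]
    exact Finset.sum_congr rfl fun j _ => padf_castLE hI g j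
  · intro i _ hi
    refine padf_of_not_lt hI g fun h => hi ?_
    simp only [Finset.mem_map, Finset.mem_univ, true_and]
    exact ⟨⟨i.1, h⟩, Fin.ext rfl⟩

def extPerm {K I : ℕ} (hI : 2 * K ≤ I) (σ' : Equiv.Perm (Fin (2 * K))) : Equiv.Perm (Fin I) where
  toFun i := if h : i.1 < 2 * K then Fin.castLE hI (σ' ⟨i.1, h⟩) else i
  invFun i := if h : i.1 < 2 * K then Fin.castLE hI (σ'.symm ⟨i.1, h⟩) else i
  left_inv := by
    intro i
    dsimp only
    by_cases h : i.1 < 2 * K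
    · rw [dif_pos h]
      have h2 : (Fin.castLE hI (σ' ⟨i.1, h⟩)).1 < 2 * K := (σ' ⟨i.1, h⟩).2
      rw [dif_pos h2]
      have : (⟨(Fin.castLE hI (σ' ⟨i.1, h⟩)).1, h2⟩ : Fin (2 * K)) = σ' ⟨i.1, h⟩ :=
        Fin.eq_of_val_eq rfl
      rw [this, Equiv.symm_apply_apply]
      exact Fin.eq_of_val_eq rfl
    · rw [dif_neg h, dif_neg h]
  right_inv := by
    intro i
    dsimp only
    by_cases h : i.1 < 2 * K
    · rw [dif_pos h]
      have h2 : (Fin.castLE hI (σ'.symm ⟨i.1, h⟩)).1 < 2 * K := (σ'.symm ⟨i.1, h⟩).2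
      rw [dif_pos h2]
      have : (⟨(Fin.castLE hI (σ'.symm ⟨i.1, h⟩)).1, h2⟩ : Fin (2 * K)) = σ'.symm ⟨i.1, h⟩ :=
        Fin.eq_of_val_eq rfl
      rw [this, Equiv.apply_symm_apply]
      exact Fin.eq_of_val_eq rfl
    · rw [dif_neg h, dif_neg h]

lemma padf_comp {K I : ℕ} (hI : 2 * K ≤ I) (σ' : Equiv.Perm (Fin (2 * K)))
    (g : Fin (2 * K) → ℕ) :
    padf hI (g ∘ ⇑σ'.symm) = padf hI g ∘ ⇑(extPerm hI σ').symm := by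
  funext i
  by_cases h : i.1 < 2 * K
  · have hsymm : (extPerm hI σ').symm i = Fin.castLE hI (σ'.symm ⟨i.1, h⟩) := dif_pos h
    rw [Function.comp_apply, hsymm, padf_castLE]
    exact dif_pos h
  · have hsymm : (extPerm hI σ').symm i = i := dif_neg h
    rw [Function.comp_apply, hsymm, padf_of_not_lt hI _ h, padf_of_not_lt hI _ h]

lemma pairOrbit_refl {I : ℕ} (x : (Fin I → ℕ) × (Fin I → ℕ)) : x ∈ pairOrbit I x :=
  ⟨Equiv.refl _, Or.inl rfl⟩

lemma pairOrbit_symm {I : ℕ} {x y : (Fin I → ℕ) × (Fin I → ℕ)}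
    (h : y ∈ pairOrbit I x) : x ∈ pairOrbit I y := by
  obtain ⟨σ, h | h⟩ := h
  · refine ⟨σ.symm, Or.inl ?_⟩
    subst h
    refine Prod.ext ?_ ?_ <;> funext i <;> simp [Function.comp]
  · refine ⟨σ.symm, Or.inr ?_⟩
    subst h
    refine Prod.ext ?_ ?_ <;> funext i <;> simp [Function.comp]

lemma pairOrbit_trans {I : ℕ} {x y z : (Fin I → ℕ) × (Fin I → ℕ)}
    (hxy : y ∈ pairOrbit I x) (hyz : z ∈ pairOrbit I y) : z ∈ pairOrbit I x := by
  obtain ⟨σ, h | h⟩ := hxy <;> obtain ⟨τ, h' | h'⟩ := hyz <;> subst h <;> subst h'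
  · exact ⟨σ.trans τ, Or.inl rfl⟩
  · exact ⟨σ.trans τ, Or.inr rfl⟩
  · exact ⟨σ.trans τ, Or.inr rfl⟩
  · exact ⟨σ.trans τ, Or.inl rfl⟩

lemma pairOrbit_eq_iff {I : ℕ} {x y : (Fin I → ℕ) × (Fin I → ℕ)} :
    pairOrbit I x = pairOrbit I y ↔ y ∈ pairOrbit I x := by
  constructor
  · intro h
    rw [h]
    exact pairOrbit_refl y
  · intro h
    ext z
    exact ⟨fun hz => pairOrbit_trans (pairOrbit_symm h) hz,
      fun hz => pairOrbit_trans h hz⟩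

lemma unpad {K I : ℕ} (hI : 2 * K ≤ I) (a b c d : Fin (2 * K) → ℕ) (σ : Equiv.Perm (Fin I))
    (h1 : padf hI c = padf hI a ∘ ⇑σ.symm) (h2 : padf hI d = padf hI b ∘ ⇑σ.symm) :
    ∃ σ' : Equiv.Perm (Fin (2 * K)), c = a ∘ ⇑σ'.symm ∧ d = b ∘ ⇑σ'.symm := by
  classical
  set s : Finset (Fin (2 * K)) := univ.filter (fun j => c j ≠ 0 ∨ d j ≠ 0) with hs
  set t : Finset (Fin (2 * K)) := univ.filter (fun j => a j ≠ 0 ∨ b j ≠ 0) with ht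
  -- key: for j ∈ s, σ.symm (castLE j) lands below 2K
  have hlt : ∀ j : Fin (2 * K), j ∈ s → (σ.symm (Fin.castLE hI j)).1 < 2 * K := by
    intro j hj
    by_contra hge
    have hc : c j = padf hI a (σ.symm (Fin.castLE hI j)) := by
      rw [← padf_castLE hI c j, h1]; rfl
    have hd : d j = padf hI b (σ.symm (Fin.castLE hI j)) := by
      rw [← padf_castLE hI d j, h2]; rfl
    rw [padf_of_not_lt hI a hge] at hc
    rw [padf_of_not_lt hI b hge] at hd
    have := (Finset.mem_filter.mp hj).2
    tauto
  set F : Fin (2 * K) → Fin (2 * K) := fun j =>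
    if h : (σ.symm (Fin.castLE hI j)).1 < 2 * K then ⟨(σ.symm (Fin.castLE hI j)).1, h⟩ else j
    with hF
  have hFcast : ∀ j ∈ s, Fin.castLE hI (F j) = σ.symm (Fin.castLE hI j) := by
    intro j hj
    simp only [hF, dif_pos (hlt j hj)]
    exact Fin.ext rfl
  have hval : ∀ j ∈ s, a (F j) = c j ∧ b (F j) = d j := by
    intro j hj
    constructor
    · rw [← padf_castLE hI a (F j), hFcast j hj, ← padf_castLE hI c j, h1]; rfl
    · rw [← padf_castLE hI b (F j), hFcast j hj, ← padf_castLE hI d j, h2]; rfl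
  have hmap : ∀ j ∈ s, F j ∈ t := by
    intro j hj
    obtain ⟨h1', h2'⟩ := hval j hj
    have := (Finset.mem_filter.mp hj).2
    rw [ht, Finset.mem_filter]
    exact ⟨Finset.mem_univ _, by rw [h1', h2']; exact this⟩
  have hinj : ∀ j ∈ s, ∀ k ∈ s, F j = F k → j = k := by
    intro j hj k hk hjk
    have : σ.symm (Fin.castLE hI j) = σ.symm (Fin.castLE hI k) := by
      rw [← hFcast j hj, ← hFcast k hk, hjk]
    exact Fin.castLE_injective hI (σ.symm.injective this)
  have hsurj : ∀ k ∈ t, ∃ j ∈ s, F j = k := by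
    intro k hk
    have hk' := (Finset.mem_filter.mp hk).2
    set i : Fin I := σ (Fin.castLE hI k) with hi
    have hci : padf hI c i = a k := by
      rw [h1]; show padf hI a (σ.symm (σ _)) = a k
      rw [Equiv.symm_apply_apply]; exact padf_castLE hI a k
    have hdi : padf hI d i = b k := by
      rw [h2]; show padf hI b (σ.symm (σ _)) = b k
      rw [Equiv.symm_apply_apply]; exact padf_castLE hI b k
    have hilt : i.1 < 2 * K := by
      by_contra hge
      rw [padf_of_not_lt hI c hge] at hci
      rw [padf_of_not_lt hI d hge] at hdi
      tauto
    refine ⟨⟨i.1, hilt⟩, ?_, ?_⟩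
    · have hcast : Fin.castLE hI (⟨i.1, hilt⟩ : Fin (2 * K)) = i := Fin.ext rfl
      rw [hs, Finset.mem_filter]
      refine ⟨Finset.mem_univ _, ?_⟩
      have hc2 : c ⟨i.1, hilt⟩ = a k := by rw [← padf_castLE hI c ⟨i.1, hilt⟩, hcast]; exact hci
      have hd2 : d ⟨i.1, hilt⟩ = b k := by rw [← padf_castLE hI d ⟨i.1, hilt⟩, hcast]; exact hdi
      rw [hc2, hd2]; exact hk'
    · have hcast : Fin.castLE hI (⟨i.1, hilt⟩ : Fin (2 * K)) = i := Fin.ext rfl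
      have hσ : σ.symm (Fin.castLE hI (⟨i.1, hilt⟩ : Fin (2 * K))) = Fin.castLE hI k := by
        rw [hcast, hi, Equiv.symm_apply_apply]
      have : (σ.symm (Fin.castLE hI (⟨i.1, hilt⟩ : Fin (2 * K)))).1 < 2 * K := by
        rw [hσ]; exact k.2
      simp only [hF, dif_pos this]
      have hv : ((Equiv.symm σ) (Fin.castLE hI (⟨i.1, hilt⟩ : Fin (2 * K)))).1 = k.1 := by
        rw [hσ]; rfl
      exact Fin.eq_of_val_eq hv
  obtain ⟨σ'', hσ1, hσ2⟩ := ext_perm s t F hmap hinj hsurj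
  refine ⟨σ''.symm, ?_, ?_⟩ <;> funext j <;>
    simp only [Equiv.symm_symm, Function.comp_apply]
  · by_cases hj : j ∈ s
    · rw [hσ1 j hj]
      exact ((hval j hj).1).symm
    · have hjt := hσ2 j hj
      have hc : c j = 0 := by
        by_contra h
        exact hj (Finset.mem_filter.mpr ⟨Finset.mem_univ _, Or.inl h⟩)
      have ha : a (σ'' j) = 0 := by
        by_contra h
        exact hjt (Finset.mem_filter.mpr ⟨Finset.mem_univ _, Or.inl h⟩)
      rw [hc, ha]
  · by_cases hj : j ∈ s
    · rw [hσ1 j hj]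
      exact ((hval j hj).2).symm
    · have hjt := hσ2 j hj
      have hd : d j = 0 := by
        by_contra h
        exact hj (Finset.mem_filter.mpr ⟨Finset.mem_univ _, Or.inr h⟩)
      have hb : b (σ'' j) = 0 := by
        by_contra h
        exact hjt (Finset.mem_filter.mpr ⟨Finset.mem_univ _, Or.inr h⟩)
      rw [hd, hb]


lemma orbit_pad_iff {K I : ℕ} (hI : 2 * K ≤ I) (x y : (Fin (2 * K) → ℕ) × (Fin (2 * K) → ℕ)) :
    pairOrbit I (padf hI x.1, padf hI x.2) = pairOrbit I (padf hI y.1, padf hI y.2) ↔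
      pairOrbit (2 * K) x = pairOrbit (2 * K) y := by
  rw [pairOrbit_eq_iff, pairOrbit_eq_iff]
  constructor
  · rintro ⟨σ, h | h⟩
    · obtain ⟨σ', hc, hd⟩ := unpad hI x.1 x.2 y.1 y.2 σ (congrArg Prod.fst h)
        (congrArg Prod.snd h)
      exact ⟨σ', Or.inl (Prod.ext hc hd)⟩
    · obtain ⟨σ', hc, hd⟩ := unpad hI x.2 x.1 y.1 y.2 σ (congrArg Prod.fst h)
        (congrArg Prod.snd h)
      exact ⟨σ', Or.inr (Prod.ext hc hd)⟩
  · rintro ⟨σ', h | h⟩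
    · obtain ⟨h1, h2⟩ := Prod.ext_iff.mp h
      refine ⟨extPerm hI σ', Or.inl (Prod.ext ?_ ?_)⟩
      · show padf hI y.1 = _
        rw [h1]; exact padf_comp hI σ' x.1
      · show padf hI y.2 = _
        rw [h2]; exact padf_comp hI σ' x.2
    · obtain ⟨h1, h2⟩ := Prod.ext_iff.mp h
      refine ⟨extPerm hI σ', Or.inr (Prod.ext ?_ ?_)⟩
      · show padf hI y.1 = _
        rw [h1]; exact padf_comp hI σ' x.2
      · show padf hI y.2 = _
        rw [h2]; exact padf_comp hI σ' x.1

lemma transport {K I : ℕ} (hI : 2 * K ≤ I) (x : (Fin I → ℕ) × (Fin I → ℕ))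
    (h1 : ∑ i, x.1 i = K) (h2 : ∑ i, x.2 i = K) :
    ∃ τ : Equiv.Perm (Fin I), ∀ i : Fin I, ¬ i.1 < 2 * K →
      x.1 (τ i) = 0 ∧ x.2 (τ i) = 0 := by
  classical
  set s : Finset (Fin I) := univ.filter (fun i => x.1 i ≠ 0 ∨ x.2 i ≠ 0) with hs
  set t₀ : Finset (Fin I) := univ.filter (fun i : Fin I => i.1 < 2 * K) with ht₀
  have hscard : s.card ≤ 2 * K := by
    calc s.card = ∑ _i ∈ s, 1 := by rw [Finset.card_eq_sum_ones]
    _ ≤ ∑ i ∈ s, (x.1 i + x.2 i) := Finset.sum_le_sum (fun i hi => by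
        have := (Finset.mem_filter.mp hi).2; omega)
    _ ≤ ∑ i, (x.1 i + x.2 i) := Finset.sum_le_sum_of_subset (Finset.filter_subset _ _)
    _ = 2 * K := by rw [Finset.sum_add_distrib, h1, h2]; ring
  have ht₀map : t₀ = univ.map (Fin.castLEEmb hI) := by
    ext i
    constructor
    · intro hi
      exact Finset.mem_map.mpr ⟨⟨i.1, (Finset.mem_filter.mp hi).2⟩, Finset.mem_univ _,
        Fin.eq_of_val_eq rfl⟩
    · intro hi
      obtain ⟨j, -, hj⟩ := Finset.mem_map.mp hi
      rw [ht₀, Finset.mem_filter]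
      exact ⟨Finset.mem_univ _, hj ▸ j.2⟩
  have ht₀card : t₀.card = 2 * K := by
    rw [ht₀map, Finset.card_map, Finset.card_univ, Fintype.card_fin]
  obtain ⟨t, hts, htcard⟩ := Finset.exists_subset_card_eq (s := t₀) (n := s.card)
    (by rw [ht₀card]; exact hscard)
  have e0 : {i // i ∈ s} ≃ {i // i ∈ t} :=
    Fintype.equivOfCardEq (by rw [Fintype.card_coe, Fintype.card_coe, htcard])
  set f : Fin I → Fin I := fun a => if h : a ∈ s then (e0 ⟨a, h⟩ : Fin I) else a with hf
  have hmap : ∀ a ∈ s, f a ∈ t := by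
    intro a ha
    simp only [hf, dif_pos ha]
    exact (e0 ⟨a, ha⟩).2
  have hinj : ∀ a ∈ s, ∀ b ∈ s, f a = f b → a = b := by
    intro a ha b hb hab
    simp only [hf, dif_pos ha, dif_pos hb] at hab
    have := e0.injective (Subtype.coe_injective hab)
    exact congrArg Subtype.val this
  have hsurj : ∀ b ∈ t, ∃ a ∈ s, f a = b := by
    intro b hb
    refine ⟨(e0.symm ⟨b, hb⟩ : Fin I), (e0.symm ⟨b, hb⟩).2, ?_⟩
    simp only [hf, dif_pos (e0.symm ⟨b, hb⟩).2]
    have : (⟨(e0.symm ⟨b, hb⟩ : Fin I), (e0.symm ⟨b, hb⟩).2⟩ : {i // i ∈ s}) = e0.symm ⟨b, hb⟩ :=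
      Subtype.ext rfl
    rw [this, Equiv.apply_symm_apply]
  obtain ⟨σ, hσ1, hσ2⟩ := ext_perm s t f hmap hinj hsurj
  refine ⟨σ.symm, ?_⟩
  intro i hi
  have hnotmem : σ.symm i ∉ s := by
    intro hmem
    have h1' : σ (σ.symm i) ∈ t := by
      rw [hσ1 _ hmem]; exact hmap _ hmem
    rw [Equiv.apply_symm_apply] at h1'
    have := (Finset.mem_filter.mp (hts h1')).2
    exact hi this
  rw [hs, Finset.mem_filter] at hnotmem
  push_neg at hnotmem
  exact hnotmem (Finset.mem_univ _)

/-- For `I ≥ 2K`, the number of identity states `|C^K_I|` equals `|C^K_{2K}|`. -/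
theorem card_identityStates_stabilizes (K I : ℕ) (hK : 1 ≤ K) (hI : 2 * K ≤ I) :
    Nat.card (IdentityStates K I) = Nat.card (IdentityStates K (2 * K)) := by
  classical
  set φ : IdentityStates K (2 * K) → IdentityStates K I := fun S =>
    let x := Classical.choose S.2
    ⟨pairOrbit I (padf hI x.1, padf hI x.2),
      (padf hI x.1, padf hI x.2),
      by rw [sum_padf]; exact (Classical.choose_spec S.2).1,
      by rw [sum_padf]; exact (Classical.choose_spec S.2).2.1, rfl⟩ with hφ
  have hbij : Function.Bijective φ := by
    constructor
    · intro S T h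
      have hST : pairOrbit I (padf hI (Classical.choose S.2).1, padf hI (Classical.choose S.2).2)
          = pairOrbit I (padf hI (Classical.choose T.2).1, padf hI (Classical.choose T.2).2) :=
        congrArg Subtype.val h
      have := (orbit_pad_iff hI _ _).mp hST
      have hS := (Classical.choose_spec S.2).2.2
      have hT := (Classical.choose_spec T.2).2.2
      exact Subtype.ext (by rw [hS, hT]; exact this)
    · intro S
      obtain ⟨O, hO⟩ := S
      obtain ⟨x, hx1, hx2, hxO⟩ := hO
      obtain ⟨τ, hτ⟩ := transport hI x hx1 hx2
      set x' : (Fin (2 * K) → ℕ) × (Fin (2 * K) → ℕ) :=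
        (fun j => x.1 (τ (Fin.castLE hI j)), fun j => x.2 (τ (Fin.castLE hI j))) with hx'
      have hpad1 : padf hI x'.1 = x.1 ∘ ⇑τ := by
        funext i
        by_cases h : i.1 < 2 * K
        · have : padf hI x'.1 i = x'.1 ⟨i.1, h⟩ := dif_pos h
          rw [this]
          rfl
        · rw [padf_of_not_lt hI _ h]
          exact ((hτ i h).1).symm
      have hpad2 : padf hI x'.2 = x.2 ∘ ⇑τ := by
        funext i
        by_cases h : i.1 < 2 * K
        · have : padf hI x'.2 i = x'.2 ⟨i.1, h⟩ := dif_pos h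
          rw [this]
          rfl
        · rw [padf_of_not_lt hI _ h]
          exact ((hτ i h).2).symm
      have hsum1 : ∑ j, x'.1 j = K := by
        rw [← sum_padf hI x'.1, hpad1]
        show ∑ i, x.1 (τ i) = K
        rw [Equiv.sum_comp τ x.1]; exact hx1
      have hsum2 : ∑ j, x'.2 j = K := by
        rw [← sum_padf hI x'.2, hpad2]
        show ∑ i, x.2 (τ i) = K
        rw [Equiv.sum_comp τ x.2]; exact hx2
      refine ⟨⟨pairOrbit (2 * K) x', x', hsum1, hsum2, rfl⟩, ?_⟩
      apply Subtype.ext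
      show pairOrbit I (padf hI _, padf hI _) = O
      set S' : IdentityStates K (2 * K) := ⟨pairOrbit (2 * K) x', x', hsum1, hsum2, rfl⟩
      have hw := (Classical.choose_spec S'.2).2.2
      set w := Classical.choose S'.2
      have hww : pairOrbit (2 * K) (w.1, w.2) = pairOrbit (2 * K) (x'.1, x'.2) := by
        rw [Prod.mk.eta, Prod.mk.eta]
        exact hw.symm
      have h1 : pairOrbit I (padf hI w.1, padf hI w.2)
          = pairOrbit I (padf hI x'.1, padf hI x'.2) :=
        (orbit_pad_iff hI (w.1, w.2) (x'.1, x'.2)).mpr hww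
      rw [h1, hpad1, hpad2, hxO]
      rw [pairOrbit_eq_iff]
      exact pairOrbit_symm ⟨τ.symm, Or.inl rfl⟩
  exact (Nat.card_eq_of_bijective φ hbij).symm
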